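/- In the formal power series ring R[[x,y]] over a commutative ℚ-algebra containing λ, with e_λ denoting the series u ↦ Σ_{m≥0}(1)_{m,λ} u^m/m! composed appropriately, the identity e_λ(e_λ(x)e_λ(y/(1+λx)) − 1) = e_λ(e_λ(x) − 1) · Σ_{k=0}^∞ (1)_{k,λ}/k! · (e_λ(x)/(1+λ(e_λ(x)−1)))^k · (e_λ(y/(1+λx)) − 1)^k holds (the sum is locally finite since e_λ(y/(1+λx)) − 1 is divisible by y). -/

import Mathlib

open MvPowerSeries

/-- The degenerate falling factorial `(x)_{n,λ}`. -/
def degFall (lam x : ℝ) (n : ℕ) : ℝ := ∏ i ∈ Finset.range n, (x - i * lam)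

lemma degFall_zero (lam : ℝ) : degFall lam 1 0 = 1 := by simp [degFall]

lemma degFall_succ (lam : ℝ) (n : ℕ) :
    degFall lam 1 (n + 1) = degFall lam 1 n * (1 - n * lam) := by
  simp [degFall, Finset.prod_range_succ]

/-- The key Vandermonde-type identity. -/
lemma keyV (lam : ℝ) (p q : ℕ) :
    ∑ k ∈ Finset.range (q + 1),
      (p.choose k : ℝ) * q.choose k * k.factorial * lam ^ k * degFall lam 1 (p + q - k)
      = degFall lam 1 p * degFall lam 1 q := by
  induction q with
  | zero => simp [degFall_zero]
  | succ q ih =>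
    -- peel the k = 0 term
    rw [Finset.sum_range_succ']
    simp only [Nat.choose_zero_right, Nat.cast_one, Nat.factorial_zero, pow_zero,
      Nat.add_sub_cancel, one_mul, mul_one, Nat.sub_zero]
    -- U : shifted sum
    have hU : degFall lam 1 (p + (q + 1)) + ∑ k ∈ Finset.range (q + 1),
        (p.choose (k+1) : ℝ) * q.choose (k+1) * (k+1).factorial * lam ^ (k+1) * degFall lam 1 (p + q - k)
        = ∑ k ∈ Finset.range (q + 1),
          (p.choose k : ℝ) * q.choose k * k.factorial * lam ^ k * degFall lam 1 (p + q - k) * (1 - (p + q - k : ℕ) * lam) := by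
      have h1 : ∑ k ∈ Finset.range (q + 2),
          (p.choose k : ℝ) * q.choose k * k.factorial * lam ^ k * degFall lam 1 (p + (q+1) - k)
          = ∑ k ∈ Finset.range (q + 1),
          (p.choose k : ℝ) * q.choose k * k.factorial * lam ^ k * degFall lam 1 (p + (q+1) - k) := by
        rw [Finset.sum_range_succ, Nat.choose_succ_self]
        simp
      have h2 : ∑ k ∈ Finset.range (q + 2),
          (p.choose k : ℝ) * q.choose k * k.factorial * lam ^ k * degFall lam 1 (p + (q+1) - k)
          = degFall lam 1 (p + (q+1)) + ∑ k ∈ Finset.range (q + 1),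
          (p.choose (k+1) : ℝ) * q.choose (k+1) * (k+1).factorial * lam ^ (k+1) * degFall lam 1 (p + q - k) := by
        rw [Finset.sum_range_succ']
        have : ∀ k ∈ Finset.range (q+1), (p.choose (k+1) : ℝ) * q.choose (k+1) * (k+1).factorial * lam ^ (k+1) * degFall lam 1 (p + (q+1) - (k+1)) = (p.choose (k+1) : ℝ) * q.choose (k+1) * (k+1).factorial * lam ^ (k+1) * degFall lam 1 (p + q - k) := by
          intro k hk
          congr 2
          omega
        rw [Finset.sum_congr rfl this]
        simp [add_comm]
      rw [← h2, h1]
      apply Finset.sum_congr rfl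
      intro k hk
      simp only [Finset.mem_range] at hk
      have hk' : k ≤ q := by omega
      have : p + (q+1) - k = (p + q - k) + 1 := by omega
      rw [this, degFall_succ]
      push_cast
      ring
    have step1 : ∑ k ∈ Finset.range (q + 1),
        (p.choose (k + 1) : ℝ) * ((q + 1).choose (k + 1)) * ((k + 1).factorial) * lam ^ (k + 1) *
          degFall lam 1 (p + (q + 1) - (k + 1))
        = ∑ k ∈ Finset.range (q + 1),
          ((p.choose (k + 1) : ℝ) * (q.choose k) * ((k + 1).factorial) * lam ^ (k + 1) *
            degFall lam 1 (p + q - k)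
          + (p.choose (k + 1) : ℝ) * (q.choose (k + 1)) * ((k + 1).factorial) * lam ^ (k + 1) *
            degFall lam 1 (p + q - k)) := by
      apply Finset.sum_congr rfl
      intro k hk
      have h1 : p + (q + 1) - (k + 1) = p + q - k := by omega
      rw [h1, Nat.choose_succ_succ']
      push_cast
      ring
    rw [step1, Finset.sum_add_distrib, add_assoc]
    have step2 : ∑ k ∈ Finset.range (q + 1),
        (p.choose (k + 1) : ℝ) * (q.choose k) * ((k + 1).factorial) * lam ^ (k + 1) *
          degFall lam 1 (p + q - k)
        + (∑ k ∈ Finset.range (q + 1),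
            (p.choose (k + 1) : ℝ) * (q.choose (k + 1)) * ((k + 1).factorial) * lam ^ (k + 1) *
              degFall lam 1 (p + q - k) + degFall lam 1 (p + (q + 1)))
        = ∑ k ∈ Finset.range (q + 1),
            (p.choose k : ℝ) * q.choose k * k.factorial * lam ^ k * degFall lam 1 (p + q - k) *
              (1 - q * lam) := by
      rw [show (∑ k ∈ Finset.range (q + 1),
            (p.choose (k + 1) : ℝ) * (q.choose (k + 1)) * ((k + 1).factorial) * lam ^ (k + 1) *
              degFall lam 1 (p + q - k) + degFall lam 1 (p + (q + 1)))
          = degFall lam 1 (p + (q + 1)) + ∑ k ∈ Finset.range (q + 1),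
            (p.choose (k + 1) : ℝ) * (q.choose (k + 1)) * ((k + 1).factorial) * lam ^ (k + 1) *
              degFall lam 1 (p + q - k) from add_comm _ _, hU, ← Finset.sum_add_distrib]
      apply Finset.sum_congr rfl
      intro k hk
      simp only [Finset.mem_range] at hk
      by_cases hkp : k + 1 ≤ p
      · have hc : (p.choose (k + 1) : ℝ) * ((k + 1).factorial) =
            (p.choose k : ℝ) * (k.factorial) * ((p - k : ℕ) : ℝ) := by
          have : p.choose (k + 1) * (k + 1).factorial = p.choose k * k.factorial * (p - k) := by
            have h := Nat.choose_succ_right_eq p k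
            calc p.choose (k+1) * (k+1).factorial = p.choose (k+1) * (k+1) * k.factorial := by
                  rw [Nat.factorial_succ]; ring
              _ = p.choose k * (p - k) * k.factorial := by rw [h]
              _ = p.choose k * k.factorial * (p - k) := by ring
          exact_mod_cast congrArg (Nat.cast (R := ℝ)) this
        have c1 : ((p + q - k : ℕ) : ℝ) = (p : ℝ) + q - k := by
          have : ((p + q - k : ℕ) : ℝ) = ((p + q : ℕ) : ℝ) - (k : ℕ) := by
            rw [Nat.cast_sub (by omega)]
          rw [this]; push_cast; ring
        have c2 : ((p - k : ℕ) : ℝ) = (p : ℝ) - k := by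
          rw [Nat.cast_sub (by omega)]
        calc (p.choose (k + 1) : ℝ) * (q.choose k) * ((k + 1).factorial) * lam ^ (k + 1) *
              degFall lam 1 (p + q - k)
            + (p.choose k : ℝ) * q.choose k * k.factorial * lam ^ k * degFall lam 1 (p + q - k) *
              (1 - ((p + q - k : ℕ) : ℝ) * lam)
            = (p.choose k : ℝ) * q.choose k * k.factorial * lam ^ k * degFall lam 1 (p + q - k) *
              (1 + (((p - k : ℕ) : ℝ) - ((p + q - k : ℕ) : ℝ)) * lam) := by
              rw [mul_comm ((p.choose (k+1) : ℝ)) ((q.choose k : ℝ))]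
              rw [mul_assoc ((q.choose k : ℝ))]
              rw [hc]
              ring
          _ = _ := by rw [c1, c2]; ring
      · have h0 : p.choose (k + 1) = 0 := Nat.choose_eq_zero_of_lt (by omega)
        by_cases hkp0 : k ≤ p
        · have hq : p + q - k = q := by omega
          simp only [h0, Nat.cast_zero, zero_mul, mul_zero, zero_add, hq]
        · have h0' : p.choose k = 0 := Nat.choose_eq_zero_of_lt (by omega)
          simp [h0, h0']
    rw [step2, ← Finset.sum_mul, ih, degFall_succ]
    ring


/-- For a two-variable formal power series `g` with zero constant term, the
composite `e_λ(g) = Σ_{k≥0} (1)_{k,λ} g^k/k!`: the sum is locally finite, so the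
coefficient at a multidegree `d` is that of the truncation to `k ≤ d 0 + d 1`. -/
noncomputable def EcompMv (lam : ℝ) (g : MvPowerSeries (Fin 2) ℝ) :
    MvPowerSeries (Fin 2) ℝ :=
  fun d => MvPowerSeries.coeff d
    (∑ k ∈ Finset.range (d 0 + d 1 + 1),
      MvPowerSeries.C (degFall lam 1 k / (Nat.factorial k)) * g ^ k)

lemma deg2 (d : Fin 2 →₀ ℕ) : Finsupp.degree d = d 0 + d 1 := by
  rw [Finsupp.degree_apply, Finset.sum_subset (Finset.subset_univ d.support)]
  · exact Fin.sum_univ_two d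
  · intro x _ hx; simpa using Finsupp.notMem_support_iff.mp hx

lemma coeff_pow_eq_zero' {a : MvPowerSeries (Fin 2) ℝ} (ha : constantCoeff a = 0)
    {d : Fin 2 →₀ ℕ} {n : ℕ} (h : d 0 + d 1 < n) : coeff d (a ^ n) = 0 := by
  apply coeff_eq_zero_of_constantCoeff_nilpotent (m := 1)
  · rw [pow_one, ha]
  · rw [deg2]; omega

lemma coeff_mul_pow_eq_zero' {a b : MvPowerSeries (Fin 2) ℝ}
    (ha : constantCoeff a = 0) (hb : constantCoeff b = 0)
    {d : Fin 2 →₀ ℕ} {p q : ℕ} (h : d 0 + d 1 < p + q) : coeff d (a ^ p * b ^ q) = 0 := by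
  rw [coeff_mul]
  apply Finset.sum_eq_zero
  rintro ⟨u, v⟩ huv
  rw [Finset.HasAntidiagonal.mem_antidiagonal] at huv
  have h0 : u 0 + v 0 = d 0 := by rw [← huv]; rfl
  have h1 : u 1 + v 1 = d 1 := by rw [← huv]; rfl
  by_cases hu : u 0 + u 1 < p
  · rw [coeff_pow_eq_zero' ha hu, zero_mul]
  · have hv : v 0 + v 1 < q := by omega
    rw [coeff_pow_eq_zero' hb hv, mul_zero]

lemma EcompMv_trunc (lam : ℝ) {a : MvPowerSeries (Fin 2) ℝ}
    (ha : constantCoeff a = 0) {d : Fin 2 →₀ ℕ} {N : ℕ} (hN : d 0 + d 1 ≤ N) :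
    coeff d (EcompMv lam a) =
      coeff d (∑ k ∈ Finset.range (N + 1),
        MvPowerSeries.C (degFall lam 1 k / (Nat.factorial k)) * a ^ k) := by
  have h : coeff d (EcompMv lam a) = coeff d (∑ k ∈ Finset.range (d 0 + d 1 + 1),
      MvPowerSeries.C (degFall lam 1 k / (Nat.factorial k)) * a ^ k) := rfl
  rw [h, map_sum, map_sum]
  apply Finset.sum_subset (Finset.range_subset_range.mpr (by omega))
  intro k hk hk2
  simp only [Finset.mem_range] at hk hk2
  rw [coeff_C_mul, coeff_pow_eq_zero' ha (by omega), mul_zero]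

lemma constantCoeff_EcompMv (lam : ℝ) (g : MvPowerSeries (Fin 2) ℝ) :
    constantCoeff (EcompMv lam g) = 1 := by
  have h : constantCoeff (EcompMv lam g) = coeff 0 (EcompMv lam g) := rfl
  rw [h]
  have h2 : coeff (0 : Fin 2 →₀ ℕ) (EcompMv lam g) = coeff (0 : Fin 2 →₀ ℕ)
      (∑ k ∈ Finset.range ((0 : Fin 2 →₀ ℕ) 0 + (0 : Fin 2 →₀ ℕ) 1 + 1),
        MvPowerSeries.C (degFall lam 1 k / (Nat.factorial k)) * g ^ k) := rfl
  rw [h2]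
  simp [degFall]

lemma natlem (n i k : ℕ) (hi : i ≤ n) (hk : k ≤ n - i) :
    n.choose i * ((i + k).factorial * (n - i).factorial)
      = (i + k).choose k * k.factorial * n.factorial := by
  have e1 : (i + k).choose k * k.factorial * i.factorial = (i + k).factorial := by
    have := Nat.choose_mul_factorial_mul_factorial (show k ≤ i + k by omega)
    simpa [Nat.add_sub_cancel] using this
  have e2 : n.choose i * i.factorial * (n - i).factorial = n.factorial := by
    exact Nat.choose_mul_factorial_mul_factorial hi
  calc n.choose i * ((i + k).factorial * (n - i).factorial)
      = n.choose i * (((i + k).choose k * k.factorial * i.factorial) * (n - i).factorial) := by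
        rw [e1]
    _ = (i + k).choose k * k.factorial * (n.choose i * i.factorial * (n - i).factorial) := by
        ring
    _ = (i + k).choose k * k.factorial * n.factorial := by rw [e2]

lemma scalar_match (lam : ℝ) (n i k : ℕ) (hi : i ≤ n) (hk : k ≤ n - i) :
    degFall lam 1 n / n.factorial * (n.choose i) * ((n - i).choose k) * lam ^ k
      = ((i + k).choose k : ℝ) * ((n - i).choose k) * k.factorial * lam ^ k *
          degFall lam 1 (i + k + (n - i) - k) / ((i + k).factorial * (n - i).factorial) := by
  have hidx : i + k + (n - i) - k = n := by omega
  rw [hidx]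
  have hnatR : (n.choose i : ℝ) * ((i + k).factorial * (n - i).factorial)
      = ((i + k).choose k : ℝ) * k.factorial * n.factorial := by
    exact_mod_cast congrArg (Nat.cast (R := ℝ)) (natlem n i k hi hk)
  rw [div_mul_eq_mul_div, div_mul_eq_mul_div, div_mul_eq_mul_div,
    div_eq_div_iff (by positivity) (by positivity)]
  linear_combination (degFall lam 1 n * ((n - i).choose k : ℝ) * lam ^ k) * hnatR

lemma wpow (lam : ℝ) (a b : MvPowerSeries (Fin 2) ℝ) (cn : ℝ) (n : ℕ) :
    MvPowerSeries.C cn * (a + b + MvPowerSeries.C lam * a * b) ^ n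
      = ∑ i ∈ Finset.range (n + 1), ∑ k ∈ Finset.range (n - i + 1),
          MvPowerSeries.C (cn * (n.choose i) * ((n - i).choose k) * lam ^ k) *
            (a ^ (i + k) * b ^ (n - i)) := by
  have hw : a + b + MvPowerSeries.C lam * a * b
      = a + b * (1 + MvPowerSeries.C lam * a) := by ring
  rw [hw, add_pow, Finset.mul_sum]
  apply Finset.sum_congr rfl
  intro i hi
  rw [mul_pow, show (1 + MvPowerSeries.C lam * a)
      = MvPowerSeries.C lam * a + 1 from add_comm _ _, add_pow]
  rw [Finset.mul_sum, Finset.mul_sum, Finset.sum_mul, Finset.mul_sum]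
  apply Finset.sum_congr rfl
  intro k hk
  rw [show ((n.choose i : ℕ) : MvPowerSeries (Fin 2) ℝ)
      = MvPowerSeries.C ((n.choose i : ℕ) : ℝ) from (map_natCast _ _).symm,
    show (((n - i).choose k : ℕ) : MvPowerSeries (Fin 2) ℝ)
      = MvPowerSeries.C (((n - i).choose k : ℕ) : ℝ) from (map_natCast _ _).symm]
  rw [mul_pow, ← map_pow]
  simp only [map_mul]
  ring

lemma EcompMv_mul (lam : ℝ) {a b : MvPowerSeries (Fin 2) ℝ}
    (ha : constantCoeff a = 0) (hb : constantCoeff b = 0) :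
    EcompMv lam (a + b + MvPowerSeries.C lam * a * b) =
      EcompMv lam a * EcompMv lam b := by
  ext d
  set N := d 0 + d 1 with hN
  have hw : constantCoeff (a + b + MvPowerSeries.C lam * a * b) = 0 := by
    simp [ha, hb]
  rw [EcompMv_trunc lam hw (le_refl N)]
  -- replace RHS with truncations
  have hR : coeff d (EcompMv lam a * EcompMv lam b) =
      coeff d ((∑ k ∈ Finset.range (N + 1),
          MvPowerSeries.C (degFall lam 1 k / (Nat.factorial k)) * a ^ k) *
        (∑ k ∈ Finset.range (N + 1),
          MvPowerSeries.C (degFall lam 1 k / (Nat.factorial k)) * b ^ k)) := by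
    rw [coeff_mul, coeff_mul]
    apply Finset.sum_congr rfl
    rintro ⟨u, v⟩ huv
    rw [Finset.HasAntidiagonal.mem_antidiagonal] at huv
    have hu0 : u 0 + v 0 = d 0 := by rw [← huv]; rfl
    have hu1 : u 1 + v 1 = d 1 := by rw [← huv]; rfl
    rw [← EcompMv_trunc lam ha (show u 0 + u 1 ≤ N by omega),
      ← EcompMv_trunc lam hb (show v 0 + v 1 ≤ N by omega)]
  rw [hR]
  -- expand LHS into a triple sum of scalars
  have hLHS : coeff d (∑ n ∈ Finset.range (N + 1),
      MvPowerSeries.C (degFall lam 1 n / (Nat.factorial n)) *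
        (a + b + MvPowerSeries.C lam * a * b) ^ n)
      = ∑ n ∈ Finset.range (N + 1), ∑ i ∈ Finset.range (n + 1), ∑ k ∈ Finset.range (n - i + 1),
          (degFall lam 1 n / (Nat.factorial n) * (n.choose i) * ((n - i).choose k) * lam ^ k) *
            coeff d (a ^ (i + k) * b ^ (n - i)) := by
    rw [map_sum]
    apply Finset.sum_congr rfl
    intro n _
    rw [wpow, map_sum]
    apply Finset.sum_congr rfl
    intro i _
    rw [map_sum]
    apply Finset.sum_congr rfl
    intro k _
    rw [coeff_C_mul]
  -- expand RHS into a triple sum of scalars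
  have hRHS : coeff d ((∑ k ∈ Finset.range (N + 1),
      MvPowerSeries.C (degFall lam 1 k / (Nat.factorial k)) * a ^ k) *
        (∑ k ∈ Finset.range (N + 1),
          MvPowerSeries.C (degFall lam 1 k / (Nat.factorial k)) * b ^ k))
      = ∑ p ∈ Finset.range (N + 1), ∑ q ∈ Finset.range (N + 1), ∑ k ∈ Finset.range (q + 1),
          (((p.choose k : ℝ) * (q.choose k) * k.factorial * lam ^ k * degFall lam 1 (p + q - k))
            / (p.factorial * q.factorial)) * coeff d (a ^ p * b ^ q) := by
    rw [Finset.sum_mul_sum, map_sum]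
    apply Finset.sum_congr rfl
    intro p _
    rw [map_sum]
    apply Finset.sum_congr rfl
    intro q _
    have h1 : (MvPowerSeries.C (degFall lam 1 p / (Nat.factorial p)) * a ^ p) *
        (MvPowerSeries.C (degFall lam 1 q / (Nat.factorial q)) * b ^ q)
        = MvPowerSeries.C (degFall lam 1 p / (Nat.factorial p) *
            (degFall lam 1 q / (Nat.factorial q))) * (a ^ p * b ^ q) := by
      rw [map_mul]; ring
    rw [h1, coeff_C_mul]
    have h2 : degFall lam 1 p / (Nat.factorial p) * (degFall lam 1 q / (Nat.factorial q))
        = ∑ k ∈ Finset.range (q + 1),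
          ((p.choose k : ℝ) * (q.choose k) * k.factorial * lam ^ k * degFall lam 1 (p + q - k))
            / (p.factorial * q.factorial) := by
      rw [← Finset.sum_div, keyV]
      rw [div_mul_div_comm]
    rw [h2, Finset.sum_mul]
  rw [hLHS, hRHS]
  rw [Finset.sum_sigma', Finset.sum_sigma', Finset.sum_sigma', Finset.sum_sigma']
  refine Eq.trans ?_ (Finset.sum_filter_of_ne
      (p := fun y : (_ : (_ : ℕ) × ℕ) × ℕ => y.2 ≤ y.1.1 ∧ y.1.1 + y.1.2 - y.2 ≤ N) ?_)
  · refine Finset.sum_nbij' (fun x => ⟨⟨x.1.2 + x.2, x.1.1 - x.1.2⟩, x.2⟩)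
      (fun y => ⟨⟨y.1.1 + y.1.2 - y.2, y.1.1 - y.2⟩, y.2⟩) ?_ ?_ ?_ ?_ ?_
    · rintro ⟨⟨n, i⟩, k⟩ hx
      simp only [Finset.mem_sigma, Finset.mem_range, Finset.mem_filter] at hx ⊢
      omega
    · rintro ⟨⟨p, q⟩, k⟩ hy
      simp only [Finset.mem_sigma, Finset.mem_range, Finset.mem_filter] at hy ⊢
      omega
    · rintro ⟨⟨n, i⟩, k⟩ hx
      simp only [Finset.mem_sigma, Finset.mem_range] at hx
      simp only [show i + k + (n - i) - k = n from by omega, show i + k - k = i from by omega]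
    · rintro ⟨⟨p, q⟩, k⟩ hy
      simp only [Finset.mem_sigma, Finset.mem_range, Finset.mem_filter] at hy
      obtain ⟨⟨⟨h1, h2⟩, h3⟩, h4, h5⟩ := hy
      simp only [show p - k + k = p from by omega, show p + q - k - (p - k) = q from by omega]
    · rintro ⟨⟨n, i⟩, k⟩ hx
      simp only [Finset.mem_sigma, Finset.mem_range] at hx
      obtain ⟨⟨h1, h2⟩, h3⟩ := hx
      have hi : i ≤ n := by omega
      have hk : k ≤ n - i := by omega
      simp only
      rw [scalar_match lam n i k hi hk]
  · rintro ⟨⟨p, q⟩, k⟩ hy hne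
    simp only [Finset.mem_sigma, Finset.mem_range] at hy
    simp only
    by_cases hkp : k ≤ p
    · refine ⟨hkp, ?_⟩
      by_contra hcon
      apply hne
      have : coeff d (a ^ p * b ^ q) = 0 :=
        coeff_mul_pow_eq_zero' ha hb (by omega)
      simp only [this, mul_zero]
    · exfalso
      apply hne
      have : p.choose k = 0 := Nat.choose_eq_zero_of_lt (by omega)
      simp [this]

/-- The locally finite sum `Σ_{k=0}^∞ (1)_{k,λ}/k! · A^k · B^k` (with `B`
divisible by `y`, only `k ≤ d 0 + d 1` contribute to the coefficient at `d`). -/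
noncomputable def locSum (lam : ℝ) (A B : MvPowerSeries (Fin 2) ℝ) :
    MvPowerSeries (Fin 2) ℝ :=
  fun d => MvPowerSeries.coeff d
    (∑ k ∈ Finset.range (d 0 + d 1 + 1),
      MvPowerSeries.C (degFall lam 1 k / (Nat.factorial k)) * A ^ k * B ^ k)

/-- `e_λ(x)` as an element of `ℝ[[x,y]]`. -/
noncomputable def Ex (lam : ℝ) : MvPowerSeries (Fin 2) ℝ :=
  EcompMv lam (MvPowerSeries.X (0 : Fin 2))

/-- `e_λ(y/(1+λx))` as an element of `ℝ[[x,y]]`. -/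
noncomputable def Eu (lam : ℝ) : MvPowerSeries (Fin 2) ℝ :=
  EcompMv lam (MvPowerSeries.X (1 : Fin 2) *
    (1 + MvPowerSeries.C lam * MvPowerSeries.X (0 : Fin 2))⁻¹)

lemma locSum_eq (lam : ℝ) (A B : MvPowerSeries (Fin 2) ℝ) :
    locSum lam A B = EcompMv lam (A * B) := by
  funext d
  exact congrArg (coeff d) (Finset.sum_congr rfl fun k _ => by rw [mul_pow, mul_assoc])


/-- In `ℝ[[x,y]]`:
`e_λ(e_λ(x)e_λ(y/(1+λx)) − 1)
  = e_λ(e_λ(x) − 1) · Σ_{k=0}^∞ (1)_{k,λ}/k! (e_λ(x)/(1+λ(e_λ(x)−1)))^k (e_λ(y/(1+λx)) − 1)^k`. -/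
theorem stmt15 (lam : ℝ) :
    EcompMv lam (Ex lam * Eu lam - 1) =
      EcompMv lam (Ex lam - 1) *
        locSum lam (Ex lam * (1 + MvPowerSeries.C lam * (Ex lam - 1))⁻¹)
          (Eu lam - 1) := by
  set A := Ex lam * (1 + MvPowerSeries.C lam * (Ex lam - 1))⁻¹ with hA
  rw [locSum_eq]
  have hca : constantCoeff (Ex lam - 1) = 0 := by
    simp [Ex, constantCoeff_EcompMv]
  have hcb : constantCoeff (A * (Eu lam - 1)) = 0 := by
    have : constantCoeff (Eu lam - 1) = 0 := by
      simp [Eu, constantCoeff_EcompMv]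
    rw [map_mul, this, mul_zero]
  rw [← EcompMv_mul lam hca hcb]
  have hu : (1 + MvPowerSeries.C lam * (Ex lam - 1)) *
      (1 + MvPowerSeries.C lam * (Ex lam - 1))⁻¹ = 1 := by
    apply MvPowerSeries.mul_inv_cancel
    rw [map_add, map_mul, hca, mul_zero, map_one, add_zero]
    exact one_ne_zero
  have harg : Ex lam * Eu lam - 1 = (Ex lam - 1) + A * (Eu lam - 1) +
      MvPowerSeries.C lam * (Ex lam - 1) * (A * (Eu lam - 1)) := by
    rw [hA]
    linear_combination (-(Ex lam * (Eu lam - 1))) * hu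
  rw [harg]
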